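/- Let ℛ be the linear order obtained from ℝ by replacing each rational by a copy of ℤ: ℛ = (ℝ ∖ ℚ) ∪ (ℚ × ℤ) ordered by x < (q,z) iff x < q, (q,z) < x iff q < x (for irrational x), and (q,z) < (q',z') iff q < q' or (q = q' and z < z'). Suppose H ⊆ 𝒫(ℕ) is Wadge hard for Σ⁰₂(𝒫(ℕ)). Then for every alternation 𝒜 on ℛ there is a family (u_ξ)_{ξ∈ℛ} of subsets of ℕ such that ξ ≤ η iff u_ξ ⊆ u_η, and u_ξ ∈ H iff ξ ∈ 𝒜. In particular, the complement 𝒫(ℕ) ∖ H has cardinality 2^{ℵ₀}. -/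

import Mathlib

open Topology

/-- The Scott topology on 𝒫(ℕ), generated by the basic open sets
`B_A = {X : A ⊆ X}` for finite `A ⊆ ℕ`. -/
def ScottPN : TopologicalSpace (Set ℕ) :=
  TopologicalSpace.generateFrom
    {O : Set (Set ℕ) | ∃ A : Set ℕ, A.Finite ∧ O = {X : Set ℕ | A ⊆ X}}

/-- An ordinal is even if its canonical decomposition `λ + n`
(`λ` zero or a limit, `n < ω`) has `n` even. -/
def OrdEven (o : Ordinal) : Prop :=
  ∃ (l : Ordinal) (n : ℕ), (l = 0 ∨ Order.IsSuccLimit l) ∧ o = l + 2 * n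

/-- Two ordinals have the same parity. -/
def SameParity (a b : Ordinal) : Prop := OrdEven a ↔ OrdEven b

/-- The Hausdorff difference operation `D_α`. -/
def DOp {E : Type*} (α : Ordinal) (U : Ordinal → Set E) : Set E :=
  ⋃ β ∈ {β : Ordinal | β < α ∧ ¬ SameParity β α}, (U β \ ⋃ γ ∈ Set.Iio β, U γ)

/-- Membership in the Hausdorff difference class `D_α(E)`. -/
def MemD {E : Type*} (t : TopologicalSpace E) (α : Ordinal) (A : Set E) : Prop :=
  ∃ U : Ordinal → Set E, (∀ β < α, IsOpen[t] (U β)) ∧ A = DOp α U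
/-- Membership in `Σ⁰₂(E)`: countable unions of differences of open sets. -/
def MemSigma2 {E : Type*} (t : TopologicalSpace E) (A : Set E) : Prop :=
  ∃ U V : ℕ → Set E, (∀ n, IsOpen[t] (U n)) ∧ (∀ n, IsOpen[t] (V n)) ∧
    A = ⋃ n, U n \ V n

/-- The linear order `ℛ` obtained from `ℝ` by replacing each rational number
by a copy of `ℤ`. -/
def ROrd : Type := {x : ℝ // Irrational x} ⊕ (ℚ × ℤ)

/-- The strict order on `ℛ`. -/
def ROrdLt : ROrd → ROrd → Prop
  | .inl x, .inl y => x.1 < y.1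
  | .inl x, .inr p => x.1 < (p.1 : ℝ)
  | .inr p, .inl y => (p.1 : ℝ) < y.1
  | .inr p, .inr p' => p.1 < p'.1 ∨ (p.1 = p'.1 ∧ p.2 < p'.2)

/-- The (non-strict) order on `ℛ`. -/
def ROrdLe (a b : ROrd) : Prop := ROrdLt a b ∨ a = b

/-- `b` is the successor of `a` in `ℛ`. -/
def ROrdSucc (a b : ROrd) : Prop :=
  ROrdLt a b ∧ ¬ ∃ c : ROrd, ROrdLt a c ∧ ROrdLt c b

/-- An alternation on `ℛ`. -/
def Alternation (A : Set ROrd) : Prop :=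
  (∀ a b : ROrd, ROrdSucc a b → (a ∈ A ↔ b ∉ A)) ∧
  (∀ a : ROrd, (¬ ∃ b, ROrdSucc b a) → (¬ ∃ b, ROrdSucc a b) → a ∉ A)

/-! ### Auxiliary material -/

section Aux

/-- A fixed enumeration of `ℚ × ℤ`. -/
def en : ℕ ≃ ℚ × ℤ := (Denumerable.eqv (ℚ × ℤ)).symm

lemma scott_basic (a : ℕ) : IsOpen[ScottPN] {X : Set ℕ | a ∈ X} := by
  have h : {X : Set ℕ | a ∈ X} = {X : Set ℕ | ({a} : Set ℕ) ⊆ X} := by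
    ext X; simp [Set.singleton_subset_iff]
  rw [h]
  exact TopologicalSpace.GenerateOpen.basic _ ⟨{a}, Set.finite_singleton a, rfl⟩

lemma scott_upward {O : Set (Set ℕ)} (hO : IsOpen[ScottPN] O) :
    ∀ ⦃X Y : Set ℕ⦄, X ⊆ Y → X ∈ O → Y ∈ O := by
  have hO' : TopologicalSpace.GenerateOpen
      {O : Set (Set ℕ) | ∃ A : Set ℕ, A.Finite ∧ O = {X : Set ℕ | A ⊆ X}} O := hO
  clear hO
  induction hO' with
  | basic O hO =>
      intro X Y hXY hX
      obtain ⟨A, -, rfl⟩ := hO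
      exact Set.Subset.trans hX hXY
  | univ => intro X Y _ _; trivial
  | inter O1 O2 h1 h2 ih1 ih2 =>
      intro X Y hXY hX; exact ⟨ih1 hXY hX.1, ih2 hXY hX.2⟩
  | sUnion S hS ih =>
      rintro X Y hXY ⟨O, hOS, hX⟩
      exact ⟨O, hOS, ih O hOS hXY hX⟩

lemma cont_mono {f : Set ℕ → Set ℕ} (hf : Continuous[ScottPN, ScottPN] f)
    {X Y : Set ℕ} (hXY : X ⊆ Y) : f X ⊆ f Y := by
  intro a ha
  have hop : IsOpen[ScottPN] (f ⁻¹' {Z : Set ℕ | a ∈ Z}) :=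
    (continuous_def.mp hf) _ (scott_basic a)
  exact scott_upward hop hXY ha

/-- The canonical chain of type `ℛ` in `𝒫(ℕ)`. -/
def chainv : ROrd → Set ℕ :=
  Sum.elim (fun x : {x : ℝ // Irrational x} => {n : ℕ | ((en n).1 : ℝ) < x.1})
    (fun p : ℚ × ℤ =>
      {n : ℕ | (en n).1 < p.1 ∨ ((en n).1 = p.1 ∧ (en n).2 < p.2)})

lemma chainv_inl (x : {x : ℝ // Irrational x}) :
    chainv (Sum.inl x) = {n : ℕ | ((en n).1 : ℝ) < x.1} := rfl

lemma chainv_inr (p : ℚ × ℤ) :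
    chainv (Sum.inr p) =
      {n : ℕ | (en n).1 < p.1 ∨ ((en n).1 = p.1 ∧ (en n).2 < p.2)} := rfl

lemma rlt_asymm : ∀ {a b : ROrd}, ROrdLt a b → ¬ ROrdLt b a := by
  intro a b h1 h2
  cases a with
  | inl x =>
    cases b with
    | inl y => exact absurd (h2 : y.1 < x.1) (not_lt.mpr (le_of_lt h1))
    | inr p => exact absurd (h2 : (p.1 : ℝ) < x.1) (not_lt.mpr (le_of_lt h1))
  | inr p =>
    cases b with
    | inl y => exact absurd (h2 : y.1 < (p.1 : ℝ)) (not_lt.mpr (le_of_lt h1))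
    | inr p' =>
      rcases (h1 : p.1 < p'.1 ∨ (p.1 = p'.1 ∧ p.2 < p'.2)) with h | ⟨he, hz⟩ <;>
        rcases (h2 : p'.1 < p.1 ∨ (p'.1 = p.1 ∧ p'.2 < p.2)) with h' | ⟨he', hz'⟩
      · exact absurd h' (not_lt.mpr (le_of_lt h))
      · exact absurd (he' ▸ h) (lt_irrefl _)
      · exact absurd (he ▸ h') (lt_irrefl _)
      · exact absurd hz' (not_lt.mpr (le_of_lt hz))

lemma rlt_trich (a b : ROrd) : ROrdLt a b ∨ a = b ∨ ROrdLt b a := by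
  cases a with
  | inl x =>
    cases b with
    | inl y =>
      rcases lt_trichotomy x.1 y.1 with h | h | h
      · exact Or.inl h
      · exact Or.inr (Or.inl (congrArg Sum.inl (Subtype.ext h)))
      · exact Or.inr (Or.inr h)
    | inr p =>
      rcases lt_or_gt_of_ne (x.2.ne_rat p.1) with h | h
      · exact Or.inl h
      · exact Or.inr (Or.inr h)
  | inr p =>
    cases b with
    | inl y =>
      rcases lt_or_gt_of_ne (y.2.ne_rat p.1).symm with h | h
      · exact Or.inl h
      · exact Or.inr (Or.inr h)
    | inr p' =>
      rcases lt_trichotomy p.1 p'.1 with h | h | h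
      · exact Or.inl (Or.inl h)
      · rcases lt_trichotomy p.2 p'.2 with h2 | h2 | h2
        · exact Or.inl (Or.inr ⟨h, h2⟩)
        · exact Or.inr (Or.inl (congrArg Sum.inr (Prod.ext h h2)))
        · exact Or.inr (Or.inr (Or.inr ⟨h.symm, h2⟩))
      · exact Or.inr (Or.inr (Or.inl h))

lemma rle_antisymm {a b : ROrd} (h1 : ROrdLe a b) (h2 : ROrdLe b a) : a = b := by
  rcases h1 with h1 | h1
  · rcases h2 with h2 | h2
    · exact absurd h2 (rlt_asymm h1)
    · exact h2.symm
  · exact h1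

lemma succ_pair (q : ℚ) (z : ℤ) :
    ROrdSucc (Sum.inr (q, z)) (Sum.inr (q, z + 1)) := by
  constructor
  · exact Or.inr ⟨rfl, by omega⟩
  · rintro ⟨c, hc1, hc2⟩
    cases c with
    | inl y =>
      exact absurd (hc2 : y.1 < (q : ℝ)) (not_lt.mpr (le_of_lt hc1))
    | inr p =>
      rcases (hc1 : q < p.1 ∨ (q = p.1 ∧ z < p.2)) with h | ⟨he, hz⟩ <;>
        rcases (hc2 : p.1 < q ∨ (p.1 = q ∧ p.2 < z + 1)) with h' | ⟨he', hz'⟩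
      · exact absurd h' (not_lt.mpr (le_of_lt h))
      · exact absurd (he' ▸ h) (lt_irrefl _)
      · exact absurd (he ▸ h') (lt_irrefl _)
      · omega

lemma inl_no_succ (x : {x : ℝ // Irrational x}) :
    ¬ ∃ b, ROrdSucc (Sum.inl x) b := by
  rintro ⟨b, hlt, hnone⟩
  cases b with
  | inl y =>
    obtain ⟨q, hq1, hq2⟩ := exists_rat_btwn (hlt : x.1 < y.1)
    exact hnone ⟨Sum.inr (q, 0), hq1, hq2⟩
  | inr p =>
    exact hnone ⟨Sum.inr (p.1, p.2 - 1), hlt, Or.inr ⟨rfl, by omega⟩⟩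

lemma inl_no_pred (x : {x : ℝ // Irrational x}) :
    ¬ ∃ b, ROrdSucc b (Sum.inl x) := by
  rintro ⟨b, hlt, hnone⟩
  cases b with
  | inl y =>
    obtain ⟨q, hq1, hq2⟩ := exists_rat_btwn (hlt : y.1 < x.1)
    exact hnone ⟨Sum.inr (q, 0), hq1, hq2⟩
  | inr p =>
    exact hnone ⟨Sum.inr (p.1, p.2 + 1), Or.inr ⟨rfl, by omega⟩, hlt⟩

lemma btwn {c d : ROrd} (h : ROrdLt c d) :
    ∃ q z, ROrdLe c (Sum.inr (q, z)) ∧ ROrdLe (Sum.inr (q, z + 1)) d := by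
  cases c with
  | inl x =>
    cases d with
    | inl y =>
      obtain ⟨q, h1, h2⟩ := exists_rat_btwn (h : x.1 < y.1)
      exact ⟨q, 0, Or.inl h1, Or.inl h2⟩
    | inr p =>
      obtain ⟨q, h1, h2⟩ := exists_rat_btwn (h : x.1 < (p.1 : ℝ))
      exact ⟨q, 0, Or.inl h1, Or.inl (Or.inl (by exact_mod_cast h2))⟩
  | inr p =>
    cases d with
    | inl y => exact ⟨p.1, p.2, Or.inr rfl, Or.inl h⟩
    | inr p' =>
      rcases (h : p.1 < p'.1 ∨ (p.1 = p'.1 ∧ p.2 < p'.2)) with h | ⟨he, hz⟩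
      · exact ⟨p.1, p.2, Or.inr rfl, Or.inl (Or.inl h)⟩
      · rcases eq_or_lt_of_le (show p.2 + 1 ≤ p'.2 by omega) with h2 | h2
        · exact ⟨p.1, p.2, Or.inr rfl, Or.inr (by rw [he, h2])⟩
        · exact ⟨p.1, p.2, Or.inr rfl, Or.inl (Or.inr ⟨he, h2⟩)⟩

lemma succ_char {a b : ROrd} (h : ROrdSucc a b) :
    ∃ q z, a = Sum.inr (q, z) ∧ b = Sum.inr (q, z + 1) := by
  obtain ⟨hlt, hnone⟩ := h
  cases a with
  | inl x => exact absurd ⟨b, hlt, hnone⟩ (inl_no_succ x)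
  | inr p =>
    cases b with
    | inl y =>
      exact absurd ⟨Sum.inr (p.1, p.2 + 1), Or.inr ⟨rfl, by omega⟩, hlt⟩ hnone
    | inr p' =>
      rcases (hlt : p.1 < p'.1 ∨ (p.1 = p'.1 ∧ p.2 < p'.2)) with h | ⟨he, hz⟩
      · exact absurd
          ⟨Sum.inr (p.1, p.2 + 1), Or.inr ⟨rfl, by omega⟩, Or.inl h⟩ hnone
      · rcases eq_or_lt_of_le (show p.2 + 1 ≤ p'.2 by omega) with h2 | h2
        · exact ⟨p.1, p.2, rfl, by rw [he, h2]⟩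
        · exact absurd
            ⟨Sum.inr (p.1, p.2 + 1), Or.inr ⟨rfl, by omega⟩,
              Or.inr ⟨he, h2⟩⟩ hnone

lemma vmono {a b : ROrd} (h : ROrdLt a b) : chainv a ⊆ chainv b := by
  intro n hn
  cases a with
  | inl x =>
    cases b with
    | inl y =>
      exact lt_trans (hn : ((en n).1 : ℝ) < x.1) (h : x.1 < y.1)
    | inr p =>
      exact Or.inl (by
        have := lt_trans (hn : ((en n).1 : ℝ) < x.1) (h : x.1 < (p.1 : ℝ))
        exact_mod_cast this)
  | inr p =>
    cases b with
    | inl y =>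
      rcases (hn : (en n).1 < p.1 ∨ ((en n).1 = p.1 ∧ (en n).2 < p.2)) with
        h1 | ⟨h1, _⟩
      · have : ((en n).1 : ℝ) < (p.1 : ℝ) := by exact_mod_cast h1
        exact lt_trans this (h : (p.1 : ℝ) < y.1)
      · show ((en n).1 : ℝ) < y.1
        rw [h1]; exact h
    | inr p' =>
      rcases (h : p.1 < p'.1 ∨ (p.1 = p'.1 ∧ p.2 < p'.2)) with h | ⟨he, hz⟩
      · rcases (hn : (en n).1 < p.1 ∨ ((en n).1 = p.1 ∧ (en n).2 < p.2)) with
          h1 | ⟨h1, _⟩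
        · exact Or.inl (lt_trans h1 h)
        · exact Or.inl (by rw [h1]; exact h)
      · rcases (hn : (en n).1 < p.1 ∨ ((en n).1 = p.1 ∧ (en n).2 < p.2)) with
          h1 | ⟨h1, h2⟩
        · exact Or.inl (he ▸ h1)
        · exact Or.inr ⟨h1.trans he, lt_trans h2 hz⟩

/-- The pieces of the `Σ⁰₂` set detecting the alternation. -/
def SAU (A : Set ROrd) (n : ℕ) : Set (Set ℕ) :=
  {X : Set ℕ | Sum.inr (en n) ∈ A ∧ en.symm ((en n).1, (en n).2 - 1) ∈ X}

def SAV (n : ℕ) : Set (Set ℕ) := {X : Set ℕ | n ∈ X}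

def SAset (A : Set ROrd) : Set (Set ℕ) := ⋃ n, SAU A n \ SAV n

lemma SAU_open (A : Set ROrd) (n : ℕ) : IsOpen[ScottPN] (SAU A n) := by
  by_cases h : Sum.inr (en n) ∈ A
  · have he : SAU A n = {X : Set ℕ | en.symm ((en n).1, (en n).2 - 1) ∈ X} := by
      ext X; simp [SAU, h]
    rw [he]; exact scott_basic _
  · have he : SAU A n = ∅ := by ext X; simp [SAU, h]
    rw [he]; exact @isOpen_empty _ ScottPN

lemma SA_sigma2 (A : Set ROrd) : MemSigma2 ScottPN (SAset A) :=
  ⟨SAU A, SAV, SAU_open A, fun n => scott_basic n, rfl⟩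

lemma v_not_mem_SA_inl (A : Set ROrd) (x : {x : ℝ // Irrational x}) :
    chainv (Sum.inl x) ∉ SAset A := by
  intro hmem
  rw [SAset, Set.mem_iUnion] at hmem
  obtain ⟨n, ⟨hA, h1⟩, h2⟩ := hmem
  rw [chainv_inl, Set.mem_setOf_eq, Equiv.apply_symm_apply] at h1
  exact h2 (by rw [chainv_inl]; exact h1)

lemma v_mem_SA_inr (A : Set ROrd) (p : ℚ × ℤ) :
    chainv (Sum.inr p) ∈ SAset A ↔ Sum.inr p ∈ A := by
  constructor
  · intro hmem
    rw [SAset, Set.mem_iUnion] at hmem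
    obtain ⟨n, ⟨hA, h1⟩, h2⟩ := hmem
    rw [chainv_inr, Set.mem_setOf_eq, Equiv.apply_symm_apply] at h1
    rw [SAV, Set.mem_setOf_eq, chainv_inr, Set.mem_setOf_eq] at h2
    push_neg at h2
    obtain ⟨h2a, h2b⟩ := h2
    have he : (en n).1 = p.1 := by
      rcases h1 with h1 | ⟨h1, _⟩
      · exact absurd h1 (not_lt.mpr h2a)
      · exact h1
    have hz : (en n).2 = p.2 := by
      rcases h1 with h1 | ⟨_, h1⟩
      · exact absurd h1 (not_lt.mpr h2a)
      · have := h2b he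
        omega
    have : en n = p := Prod.ext he hz
    rwa [this] at hA
  · intro hA
    rw [SAset, Set.mem_iUnion]
    refine ⟨en.symm p, ⟨?_, ?_⟩, ?_⟩
    · show Sum.inr (en (en.symm p)) ∈ A
      rwa [Equiv.apply_symm_apply]
    · show en.symm ((en (en.symm p)).1, (en (en.symm p)).2 - 1)
        ∈ chainv (Sum.inr p)
      rw [Equiv.apply_symm_apply, chainv_inr]
      refine Or.inr ⟨?_, ?_⟩
      · rw [Equiv.apply_symm_apply]
      · rw [Equiv.apply_symm_apply]
        show p.2 - 1 < p.2
        omega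
    · intro hmem
      rw [SAV, Set.mem_setOf_eq, chainv_inr, Set.mem_setOf_eq,
        Equiv.apply_symm_apply] at hmem
      rcases hmem with h | ⟨_, h⟩
      · exact lt_irrefl _ h
      · exact lt_irrefl _ h

lemma mk_irr : Cardinal.mk {x : ℝ // Irrational x} = 2 ^ Cardinal.aleph0 := by
  have hid : Cardinal.mk {x : ℝ // Irrational x}
      = Cardinal.mk ↥{x : ℝ | Irrational x} := rfl
  rw [Cardinal.two_power_aleph0, hid]
  have hsum := Cardinal.mk_sum_compl {x : ℝ | Irrational x}
  rw [Cardinal.mk_real] at hsum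
  have hc : Cardinal.mk ↥({x : ℝ | Irrational x}ᶜ) ≤ Cardinal.aleph0 := by
    have he : ({x : ℝ | Irrational x}ᶜ) = Set.range ((↑) : ℚ → ℝ) := by
      ext t; simp [Irrational]
    rw [he]
    exact le_of_le_of_eq Cardinal.mk_range_le (Cardinal.mk_denumerable ℚ)
  refine le_antisymm ?_ ?_
  · rw [← Cardinal.mk_real]
    exact Cardinal.mk_subtype_le _
  · by_contra hlt
    rw [not_le] at hlt
    have h2 : Cardinal.mk ↥({x : ℝ | Irrational x}ᶜ) < Cardinal.continuum :=
      lt_of_le_of_lt hc Cardinal.aleph0_lt_continuum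
    have hfin := Cardinal.add_lt_of_lt Cardinal.aleph0_le_continuum hlt h2
    rw [hsum] at hfin
    exact lt_irrefl _ hfin

end Aux

/-- If `H ⊆ 𝒫(ℕ)` is Wadge hard for `Σ⁰₂(𝒫(ℕ))` then for every alternation
`𝒜` on `ℛ` there is an `(H,𝒜)`-alternating `ℛ`-chain in `𝒫(ℕ)`; in
particular the complement of `H` has cardinality `2^ℵ₀`. -/
theorem alternating_R_chains_of_sigma2_hard (H : Set (Set ℕ))
    (hH : ∀ A : Set (Set ℕ), MemSigma2 ScottPN A →
      ∃ f : Set ℕ → Set ℕ, Continuous[ScottPN, ScottPN] f ∧ A = f ⁻¹' H) :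
    (∀ A : Set ROrd, Alternation A →
      ∃ u : ROrd → Set ℕ,
        (∀ ξ η : ROrd, ROrdLe ξ η ↔ u ξ ⊆ u η) ∧
        (∀ ξ : ROrd, u ξ ∈ H ↔ ξ ∈ A)) ∧
    Cardinal.mk ↥(Hᶜ) = 2 ^ Cardinal.aleph0 := by
  have main : ∀ A : Set ROrd, Alternation A →
      ∃ u : ROrd → Set ℕ,
        (∀ ξ η : ROrd, ROrdLe ξ η ↔ u ξ ⊆ u η) ∧
        (∀ ξ : ROrd, u ξ ∈ H ↔ ξ ∈ A) := by
    intro A hA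
    obtain ⟨f, hf, hfa⟩ := hH (SAset A) (SA_sigma2 A)
    have key : ∀ ξ : ROrd, chainv ξ ∈ SAset A ↔ ξ ∈ A := by
      intro ξ
      cases ξ with
      | inl x =>
        constructor
        · intro h; exact absurd h (v_not_mem_SA_inl A x)
        · intro h; exact absurd h (hA.2 _ (inl_no_pred x) (inl_no_succ x))
      | inr p => exact v_mem_SA_inr A p
    have uH : ∀ ξ : ROrd, f (chainv ξ) ∈ H ↔ ξ ∈ A := by
      intro ξ
      constructor
      · intro h
        exact (key ξ).mp (by rw [hfa]; exact h)
      · intro h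
        have hm := (key ξ).mpr h
        rw [hfa] at hm
        exact hm
    have forw : ∀ ξ η : ROrd, ROrdLe ξ η → f (chainv ξ) ⊆ f (chainv η) := by
      intro ξ η h
      rcases h with h | h
      · exact cont_mono hf (vmono h)
      · rw [h]
    refine ⟨fun ξ => f (chainv ξ), ?_, uH⟩
    intro ξ η
    constructor
    · exact forw ξ η
    · intro hsub
      rcases rlt_trich ξ η with h | h | h
      · exact Or.inl h
      · exact Or.inr h
      · exfalso
        obtain ⟨q, z, h1, h2⟩ := btwn h
        have e1 : f (chainv (Sum.inr (q, z))) ⊆ f (chainv (Sum.inr (q, z + 1))) :=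
          forw _ _ (Or.inl (succ_pair q z).1)
        have e2 : f (chainv (Sum.inr (q, z + 1))) ⊆ f (chainv (Sum.inr (q, z))) :=
          (forw _ _ h2).trans (hsub.trans (forw _ _ h1))
        have heq := Set.Subset.antisymm e1 e2
        have hiff := hA.1 _ _ (succ_pair q z)
        have m1 := uH (Sum.inr (q, z))
        have m2 := uH (Sum.inr (q, z + 1))
        rw [heq] at m1
        tauto
  refine ⟨main, ?_⟩
  have memA0 : ∀ p : ℚ × ℤ,
      Sum.inr p ∈ {a : ROrd | ∃ p : ℚ × ℤ, a = Sum.inr p ∧ Even p.2}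
        ↔ Even p.2 := by
    intro p
    constructor
    · rintro ⟨p', hp', hev⟩
      cases Sum.inr_injective hp'
      exact hev
    · intro h; exact ⟨p, rfl, h⟩
  have altA0 : Alternation {a : ROrd | ∃ p : ℚ × ℤ, a = Sum.inr p ∧ Even p.2} := by
    constructor
    · intro a b hs
      obtain ⟨q, z, rfl, rfl⟩ := succ_char hs
      have e1 := memA0 (q, z)
      have e2 := memA0 (q, z + 1)
      have e3 : Even z ↔ ¬ Even (z + 1) := by simp [Int.even_add_one]
      exact ⟨fun h h' => (e3.mp (e1.mp h)) (e2.mp h'), fun h => e1.mpr (e3.mpr fun h' => h (e2.mpr h'))⟩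
    · intro a h1 h2
      cases a with
      | inl x =>
        rintro ⟨p, hp, -⟩
        exact Sum.inl_ne_inr hp
      | inr p =>
        exact absurd ⟨Sum.inr (p.1, p.2 + 1), succ_pair p.1 p.2⟩ h2
  obtain ⟨u, hu1, hu2⟩ := main _ altA0
  have hnot : ∀ x : {x : ℝ // Irrational x}, u (Sum.inl x) ∈ Hᶜ := by
    intro x hmem
    obtain ⟨p, hp, -⟩ := (hu2 (Sum.inl x)).mp hmem
    exact Sum.inl_ne_inr hp
  have hginj : Function.Injective
      (fun x : {x : ℝ // Irrational x} => (⟨u (Sum.inl x), hnot x⟩ : ↥(Hᶜ))) := by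
    intro x y hxy
    have h1 : u (Sum.inl x) = u (Sum.inl y) := congrArg Subtype.val hxy
    have l1 : ROrdLe (Sum.inl x) (Sum.inl y) := (hu1 _ _).mpr h1.subset
    have l2 : ROrdLe (Sum.inl y) (Sum.inl x) := (hu1 _ _).mpr h1.symm.subset
    exact Sum.inl_injective (rle_antisymm l1 l2)
  refine le_antisymm ?_ ?_
  · calc Cardinal.mk ↥(Hᶜ) ≤ Cardinal.mk (Set ℕ) := Cardinal.mk_set_le _
      _ = 2 ^ Cardinal.aleph0 := by rw [Cardinal.mk_set, Cardinal.mk_nat]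
  · calc (2 : Cardinal) ^ Cardinal.aleph0
        = Cardinal.mk {x : ℝ // Irrational x} := mk_irr.symm
      _ ≤ Cardinal.mk ↥(Hᶜ) := Cardinal.mk_le_of_injective hginj
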